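/- Define recursively for finite graphs Ĝ, vertices v, t ∈ ℕ: Φ_Ĝ(v,t) = 1 if t = 0 or v is isolated; otherwise Φ_Ĝ(v,t) = (1 + λ·Σ_{u ∈ N(v)} Φ_{Ĝ_0}(u, t-1))^{-1} where Ĝ_0 is induced by deleting v. Define Ψ identically except Ψ_Ĝ(v,0) = 0. Then for the monomer-dimer Gibbs measure with activity λ: Ψ_G(v,2t) ≤ P_G(v ∉ M) ≤ Φ_G(v,2t) and Φ_G(v,2t+1) ≤ P_G(v ∉ M) ≤ Ψ_G(v,2t+1) for all finite graphs G, vertices v, and t ∈ ℕ. -/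
import Mathlib


open Finset

/-- The recursively defined quantity `Φ` (for `base = 1`) resp. `Ψ` (for `base = 0`)
of the monomer-dimer computation-tree recursion: `F(0, A, v) = base`; for `t > 0`,
`F(t, A, v) = 1` if `v` has no neighbors in `A`, and otherwise
`F(t, A, v) = (1 + λ · Σ_{u ∈ N(v) ∩ A} F(t-1, A \ {v}, u))⁻¹`. -/
noncomputable def mdRec {V : Type*} [Fintype V] [DecidableEq V] (G : SimpleGraph V)
    [DecidableRel G.Adj] (lam base : ℝ) : ℕ → Finset V → V → ℝ
  | 0, _, _ => base
  | t + 1, A, v =>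
    if (G.neighborFinset v ∩ A.erase v) = ∅ then 1
    else (1 + lam * ∑ u ∈ G.neighborFinset v ∩ A.erase v,
            mdRec G lam base t (A.erase v) u)⁻¹

/-- Monomer-dimer partition function of the subgraph of `G` induced on `A`. -/
noncomputable def mdZ {V : Type*} [Fintype V] [DecidableEq V] (G : SimpleGraph V)
    [DecidableRel G.Adj] (lam : ℝ) (A : Finset V) : ℝ :=
  ∑ M ∈ G.edgeFinset.powerset.filter
      (fun M => (∀ e ∈ M, ∀ x : V, x ∈ e → x ∈ A) ∧
        ∀ e ∈ M, ∀ f ∈ M, e ≠ f → ∀ x : V, x ∈ e → x ∉ f),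
    lam ^ M.card

/-- Probability under the monomer-dimer Gibbs measure on the subgraph induced on `A`
that the random matching does not cover `v`. -/
noncomputable def mdPnot {V : Type*} [Fintype V] [DecidableEq V] (G : SimpleGraph V)
    [DecidableRel G.Adj] (lam : ℝ) (A : Finset V) (v : V) : ℝ :=
  (∑ M ∈ G.edgeFinset.powerset.filter
      (fun M => (∀ e ∈ M, ∀ x : V, x ∈ e → x ∈ A) ∧
        (∀ e ∈ M, ∀ f ∈ M, e ≠ f → ∀ x : V, x ∈ e → x ∉ f) ∧ ∀ e ∈ M, v ∉ e),
    lam ^ M.card) / mdZ G lam A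

section Aux
variable {V : Type*} [Fintype V] [DecidableEq V] (G : SimpleGraph V) [DecidableRel G.Adj]

/-- The set of matchings of the induced subgraph on `A`. -/
noncomputable def mdM (A : Finset V) : Finset (Finset (Sym2 V)) :=
  G.edgeFinset.powerset.filter
      (fun M => (∀ e ∈ M, ∀ x : V, x ∈ e → x ∈ A) ∧
        ∀ e ∈ M, ∀ f ∈ M, e ≠ f → ∀ x : V, x ∈ e → x ∉ f)

lemma mdM_mem {A : Finset V} {M : Finset (Sym2 V)} :
    M ∈ mdM G A ↔ M ⊆ G.edgeFinset ∧ (∀ e ∈ M, ∀ x : V, x ∈ e → x ∈ A) ∧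
      ∀ e ∈ M, ∀ f ∈ M, e ≠ f → ∀ x : V, x ∈ e → x ∉ f := by
  simp [mdM, Finset.mem_filter, Finset.mem_powerset, and_assoc]

lemma mdZ_eq (lam : ℝ) (A : Finset V) :
    mdZ G lam A = ∑ M ∈ mdM G A, lam ^ M.card := rfl

lemma mdZ_pos {lam : ℝ} (hlam : 0 < lam) (A : Finset V) : 0 < mdZ G lam A := by
  rw [mdZ_eq]
  apply Finset.sum_pos (fun M _ => pow_pos hlam _)
  exact ⟨∅, by simp [mdM_mem]⟩

lemma mdPnot_eq (lam : ℝ) (A : Finset V) (v : V) :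
    mdPnot G lam A v = mdZ G lam (A.erase v) / mdZ G lam A := by
  unfold mdPnot
  congr 1
  rw [mdZ_eq]
  apply Finset.sum_congr _ (fun _ _ => rfl)
  ext M
  simp only [Finset.mem_filter, Finset.mem_powerset, mdM_mem]
  constructor
  · rintro ⟨hsub, h1, h2, h3⟩
    refine ⟨hsub, fun e he x hx => Finset.mem_erase.mpr ⟨?_, h1 e he x hx⟩, h2⟩
    rintro rfl; exact h3 e he hx
  · rintro ⟨hsub, h1, h2⟩
    refine ⟨hsub, fun e he x hx => (Finset.mem_erase.mp (h1 e he x hx)).2, h2,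
      fun e he hv => (Finset.mem_erase.mp (h1 e he v hv)).1 rfl⟩

/-- The key recursion for the partition function. -/
lemma mdZ_rec {lam : ℝ} (A : Finset V) {v : V} (hv : v ∈ A) :
    mdZ G lam A = mdZ G lam (A.erase v)
      + lam * ∑ u ∈ G.neighborFinset v ∩ (A.erase v),
          mdZ G lam ((A.erase v).erase u) := by
  classical
  set B := A.erase v with hB
  set S := G.neighborFinset v ∩ B with hS
  have hvB : v ∉ B := Finset.notMem_erase v A
  rw [mdZ_eq, ← Finset.sum_filter_add_sum_filter_not (mdM G A) (fun M => ∀ e ∈ M, v ∉ e)]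
  congr 1
  · -- matchings avoiding v are matchings of B
    rw [mdZ_eq]
    apply Finset.sum_congr _ (fun _ _ => rfl)
    ext M
    simp only [Finset.mem_filter, mdM_mem]
    constructor
    · rintro ⟨⟨hsub, h1, h2⟩, h3⟩
      refine ⟨hsub, fun e he x hx => Finset.mem_erase.mpr ⟨?_, h1 e he x hx⟩, h2⟩
      rintro rfl; exact h3 e he hx
    · rintro ⟨hsub, h1, h2⟩
      exact ⟨⟨hsub, fun e he x hx => (Finset.mem_erase.mp (h1 e he x hx)).2, h2⟩,
        fun e he hv' => (Finset.mem_erase.mp (h1 e he v hv')).1 rfl⟩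
  · -- matchings covering v
    have hset : (mdM G A).filter (fun M => ¬ ∀ e ∈ M, v ∉ e)
        = S.biUnion (fun u => (mdM G (B.erase u)).image (insert s(v, u))) := by
      ext M
      simp only [Finset.mem_filter, Finset.mem_biUnion, Finset.mem_image, mdM_mem]
      constructor
      · rintro ⟨⟨hsub, h1, h2⟩, h3⟩
        push_neg at h3
        obtain ⟨e, he, hve⟩ := h3
        obtain ⟨u, hu⟩ := Sym2.mem_iff_exists.mp hve
        subst hu
        have hadj : G.Adj v u := by
          have := hsub he; rw [SimpleGraph.mem_edgeFinset] at this
          exact this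
        have huA : u ∈ A := h1 _ he u (by simp)
        have huS : u ∈ S := by
          rw [hS, Finset.mem_inter, SimpleGraph.mem_neighborFinset]
          exact ⟨hadj, Finset.mem_erase.mpr ⟨hadj.ne', huA⟩⟩
        refine ⟨u, huS, M.erase s(v,u), ⟨fun f hf => hsub (Finset.mem_of_mem_erase hf),
          ?_, fun e' he' f' hf' => h2 e' (Finset.mem_of_mem_erase he') f' (Finset.mem_of_mem_erase hf')⟩,
          Finset.insert_erase he⟩
        -- vertices of other edges avoid v and u
        intro f hf x hx
        obtain ⟨hfne, hfM⟩ := Finset.mem_erase.mp hf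
        have hxA : x ∈ A := h1 f hfM x hx
        have hxv : x ≠ v := fun h => h2 _ he f hfM (Ne.symm hfne) v (by simp) (h ▸ hx)
        have hxu : x ≠ u := fun h => h2 _ he f hfM (Ne.symm hfne) u (by simp) (h ▸ hx)
        exact Finset.mem_erase.mpr ⟨hxu, Finset.mem_erase.mpr ⟨hxv, hxA⟩⟩
      · rintro ⟨u, huS, M', ⟨hsub, h1, h2⟩, rfl⟩
        rw [hS, Finset.mem_inter, SimpleGraph.mem_neighborFinset] at huS
        obtain ⟨hadj, huB⟩ := huS
        have hvu : s(v,u) ∈ G.edgeFinset := by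
          rw [SimpleGraph.mem_edgeFinset]; exact hadj
        have hnotin : ∀ x : V, x ∈ s(v,u) → x ∉ B.erase u := by
          intro x hx hmem
          obtain h | h := Sym2.mem_iff.mp hx
          · exact hvB (h ▸ Finset.mem_of_mem_erase hmem)
          · exact Finset.notMem_erase u B (h ▸ hmem)
        refine ⟨⟨?_, ?_, ?_⟩, ?_⟩
        · intro f hf
          rcases Finset.mem_insert.mp hf with rfl | hf
          · exact hvu
          · exact hsub hf
        · intro f hf x hx
          rcases Finset.mem_insert.mp hf with rfl | hf
          · obtain h | h := Sym2.mem_iff.mp hx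
            · exact h ▸ hv
            · exact h ▸ Finset.mem_of_mem_erase huB
          · exact Finset.mem_of_mem_erase (Finset.mem_of_mem_erase (h1 f hf x hx))
        · intro e he f hf hne x hxe
          rcases Finset.mem_insert.mp he with rfl | he <;>
            rcases Finset.mem_insert.mp hf with rfl | hf
          · exact absurd rfl hne
          · intro hxf; exact hnotin x hxe (h1 f hf x hxf)
          · intro hxf; exact hnotin x hxf (h1 e he x hxe)
          · exact h2 e he f hf hne x hxe
        · push_neg
          exact ⟨s(v,u), Finset.mem_insert_self _ _, by simp⟩
    rw [hset]
    rw [Finset.sum_biUnion]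
    · rw [Finset.mul_sum]
      apply Finset.sum_congr rfl
      intro u huS
      have hinj : ∀ M1 ∈ mdM G (B.erase u), ∀ M2 ∈ mdM G (B.erase u),
          insert s(v,u) M1 = insert s(v,u) M2 → M1 = M2 := by
        intro M1 hM1 M2 hM2 heq
        rw [mdM_mem] at hM1 hM2
        have h1 : s(v,u) ∉ M1 := fun h =>
          hvB (Finset.mem_of_mem_erase (hM1.2.1 _ h v (by simp)))
        have h2 : s(v,u) ∉ M2 := fun h =>
          hvB (Finset.mem_of_mem_erase (hM2.2.1 _ h v (by simp)))
        have := congrArg (fun s => Finset.erase s s(v,u)) heq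
        simpa [Finset.erase_insert h1, Finset.erase_insert h2] using this
      rw [Finset.sum_image hinj, mdZ_eq, Finset.mul_sum]
      apply Finset.sum_congr rfl
      intro M' hM'
      rw [mdM_mem] at hM'
      have : s(v,u) ∉ M' := by
        intro h
        exact hvB (Finset.mem_of_mem_erase (hM'.2.1 _ h v (by simp)))
      rw [Finset.card_insert_of_notMem this, pow_succ, mul_comm]
    · -- pairwise disjoint images
      intro u1 hu1 u2 hu2 hne
      have hu2' : u2 ∈ S := Finset.mem_coe.mp hu2
      simp only [Finset.disjoint_left, Finset.mem_image]
      rintro M ⟨M1, hM1, rfl⟩ ⟨M2, hM2, heq⟩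
      rw [mdM_mem] at hM1 hM2
      have hmem : s(v,u2) ∈ insert s(v,u1) M1 := heq ▸ Finset.mem_insert_self _ _
      rcases Finset.mem_insert.mp hmem with h | h
      · have h2 : u2 = u1 ∨ u2 = v := by
          have := Sym2.eq_iff.mp h
          tauto
        rcases h2 with h2 | h2
        · exact hne (h2 ▸ rfl)
        · rw [hS, Finset.mem_inter] at hu2'
          exact hvB (h2 ▸ hu2'.2)
      · exact hvB (Finset.mem_of_mem_erase (hM1.2.1 _ h v (by simp)))

lemma mdPnot_rec {lam : ℝ} (hlam : 0 < lam) (A : Finset V) {v : V} (hv : v ∈ A)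
    (hS : (G.neighborFinset v ∩ A.erase v) ≠ ∅) :
    mdPnot G lam A v
      = (1 + lam * ∑ u ∈ G.neighborFinset v ∩ A.erase v,
          mdPnot G lam (A.erase v) u)⁻¹ := by
  have hZB : 0 < mdZ G lam (A.erase v) := mdZ_pos G hlam _
  have hne := hZB.ne'
  rw [mdPnot_eq, mdZ_rec G A hv]
  simp only [mdPnot_eq]
  rw [← Finset.sum_div]
  rw [show (1:ℝ) + lam * ((∑ u ∈ G.neighborFinset v ∩ A.erase v,
        mdZ G lam ((A.erase v).erase u)) / mdZ G lam (A.erase v))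
      = (mdZ G lam (A.erase v) + lam * ∑ u ∈ G.neighborFinset v ∩ A.erase v,
          mdZ G lam ((A.erase v).erase u)) / mdZ G lam (A.erase v) from by
    field_simp]
  rw [inv_div]

lemma mdPnot_isolated {lam : ℝ} (hlam : 0 < lam) (A : Finset V) {v : V} (hv : v ∈ A)
    (hS : (G.neighborFinset v ∩ A.erase v) = ∅) :
    mdPnot G lam A v = 1 := by
  have := mdZ_rec G (lam := lam) A hv
  rw [hS] at this
  simp only [Finset.sum_empty, mul_zero, add_zero] at this
  rw [mdPnot_eq, ← this, div_self (mdZ_pos G hlam A).ne']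


lemma mdPnot_nonneg {lam : ℝ} (hlam : 0 < lam) (A : Finset V) (v : V) :
    0 ≤ mdPnot G lam A v := by
  rw [mdPnot_eq]
  exact div_nonneg (mdZ_pos G hlam _).le (mdZ_pos G hlam _).le

lemma mdPnot_le_one {lam : ℝ} (hlam : 0 < lam) (A : Finset V) (v : V) :
    mdPnot G lam A v ≤ 1 := by
  rw [mdPnot_eq, div_le_one (mdZ_pos G hlam A), mdZ_eq, mdZ_eq]
  apply Finset.sum_le_sum_of_subset_of_nonneg
  · intro M hM
    rw [mdM_mem] at hM ⊢
    exact ⟨hM.1, fun e he x hx => Finset.mem_of_mem_erase (hM.2.1 e he x hx), hM.2.2⟩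
  · intro M _ _
    positivity

lemma mdRec_nonneg {lam : ℝ} (hlam : 0 < lam) {base : ℝ} (hbase : 0 ≤ base) :
    ∀ (t : ℕ) (A : Finset V) (v : V), 0 ≤ mdRec G lam base t A v := by
  intro t
  induction t with
  | zero => intro A v; exact hbase
  | succ t ih =>
    intro A v
    by_cases h : G.neighborFinset v ∩ A.erase v = ∅
    · simp [mdRec, h]
    · simp only [mdRec, h, if_neg, if_false]
      have hsum : 0 ≤ ∑ u ∈ G.neighborFinset v ∩ A.erase v,
          mdRec G lam base t (A.erase v) u :=
        Finset.sum_nonneg fun u _ => ih _ u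
      have : (0:ℝ) < 1 + lam * ∑ u ∈ G.neighborFinset v ∩ A.erase v,
          mdRec G lam base t (A.erase v) u := by nlinarith
      positivity

lemma mdKey {lam : ℝ} (hlam : 0 < lam) :
    ∀ (t : ℕ) (A : Finset V) (v : V), v ∈ A →
      (Even t → mdRec G lam 0 t A v ≤ mdPnot G lam A v
        ∧ mdPnot G lam A v ≤ mdRec G lam 1 t A v)
      ∧ (¬ Even t → mdRec G lam 1 t A v ≤ mdPnot G lam A v
        ∧ mdPnot G lam A v ≤ mdRec G lam 0 t A v) := by
  intro t
  induction t with
  | zero =>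
    intro A v hv
    exact ⟨fun _ => ⟨mdPnot_nonneg G hlam A v, mdPnot_le_one G hlam A v⟩,
      fun h => absurd Even.zero h⟩
  | succ t ih =>
    intro A v hv
    by_cases hS : G.neighborFinset v ∩ A.erase v = ∅
    · have h1 : mdPnot G lam A v = 1 := mdPnot_isolated G hlam A hv hS
      constructor <;> intro _ <;> constructor <;> simp [mdRec, hS, h1]
    · have hrec := mdPnot_rec G hlam A hv hS
      have hErec : ∀ base : ℝ, mdRec G lam base (t+1) A v
          = (1 + lam * ∑ u ∈ G.neighborFinset v ∩ A.erase v,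
              mdRec G lam base t (A.erase v) u)⁻¹ := by
        intro base; simp [mdRec, hS]
      have hmemB : ∀ u ∈ G.neighborFinset v ∩ A.erase v, u ∈ A.erase v :=
        fun u hu => (Finset.mem_inter.mp hu).2
      have hcmp : ∀ (f g : V → ℝ), (∀ u ∈ G.neighborFinset v ∩ A.erase v, 0 ≤ f u) →
          (∀ u ∈ G.neighborFinset v ∩ A.erase v, f u ≤ g u) →
          (1 + lam * ∑ u ∈ G.neighborFinset v ∩ A.erase v, g u)⁻¹
            ≤ (1 + lam * ∑ u ∈ G.neighborFinset v ∩ A.erase v, f u)⁻¹ := by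
        intro f g hf hfg
        have h0 : 0 ≤ ∑ u ∈ G.neighborFinset v ∩ A.erase v, f u := Finset.sum_nonneg hf
        have h1 : (0:ℝ) < 1 + lam * ∑ u ∈ G.neighborFinset v ∩ A.erase v, f u := by
          nlinarith
        apply inv_anti₀ h1
        have := Finset.sum_le_sum hfg
        nlinarith
      have hP0 : ∀ u ∈ G.neighborFinset v ∩ A.erase v, 0 ≤ mdPnot G lam (A.erase v) u :=
        fun u _ => mdPnot_nonneg G hlam _ u
      have hR0 : ∀ (base : ℝ), 0 ≤ base →
          ∀ u ∈ G.neighborFinset v ∩ A.erase v, 0 ≤ mdRec G lam base t (A.erase v) u :=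
        fun base hb u _ => mdRec_nonneg G hlam hb t _ u
      rcases Nat.even_or_odd t with ht | ht
      · have hodd : ¬ Even (t+1) := by simp [Nat.even_add_one, ht]
        refine ⟨fun h => absurd h hodd, fun _ => ⟨?_, ?_⟩⟩
        · rw [hrec, hErec]
          exact hcmp _ _ hP0 (fun u hu => ((ih _ u (hmemB u hu)).1 ht).2)
        · rw [hrec, hErec]
          exact hcmp _ _ (hR0 0 le_rfl) (fun u hu => ((ih _ u (hmemB u hu)).1 ht).1)
      · have hodd : ¬ Even t := Nat.not_even_iff_odd.mpr ht
        have heven : Even (t+1) := Nat.even_add_one.mpr hodd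
        refine ⟨fun _ => ⟨?_, ?_⟩, fun h => absurd heven h⟩
        · rw [hrec, hErec]
          exact hcmp _ _ hP0 (fun u hu => ((ih _ u (hmemB u hu)).2 hodd).2)
        · rw [hrec, hErec]
          exact hcmp _ _ (hR0 1 zero_le_one) (fun u hu => ((ih _ u (hmemB u hu)).2 hodd).1)

end Aux

/-- With `Φ = mdRec G λ 1` and `Ψ = mdRec G λ 0`, for every finite graph
`G`, vertex `v` and `t ∈ ℕ`: `Ψ(2t) ≤ P_G(v ∉ M) ≤ Φ(2t)` and
`Φ(2t+1) ≤ P_G(v ∉ M) ≤ Ψ(2t+1)`. -/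
theorem monomer_dimer_recursive_bounds {V : Type*} [Fintype V] [DecidableEq V]
    (G : SimpleGraph V) [DecidableRel G.Adj] (lam : ℝ) (hlam : 0 < lam)
    (v : V) (t : ℕ) :
    (mdRec G lam 0 (2 * t) Finset.univ v ≤ mdPnot G lam Finset.univ v
      ∧ mdPnot G lam Finset.univ v ≤ mdRec G lam 1 (2 * t) Finset.univ v)
    ∧ (mdRec G lam 1 (2 * t + 1) Finset.univ v ≤ mdPnot G lam Finset.univ v
      ∧ mdPnot G lam Finset.univ v ≤ mdRec G lam 0 (2 * t + 1) Finset.univ v) := by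
  refine ⟨(mdKey G hlam (2*t) Finset.univ v (Finset.mem_univ v)).1 ⟨t, two_mul t⟩,
    (mdKey G hlam (2*t+1) Finset.univ v (Finset.mem_univ v)).2 ?_⟩
  simp [Nat.even_add_one, parity_simps]
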